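/- Let $G$ be a finitely generated amenable group with word metric and F\o lner sequence $(S_j)_{j\in\mathbb{N}}$. Let $r \in \mathbb{N}_{>0}$, let $T$ be an $r$-tiling of $G$, and set $T_j := \{g \in T : B_r(g) \subseteq S_j\}$. Then there exists $l \in \mathbb{N}$ such that for all $j \ge l$: $\frac{1}{2\,|B_{2r}(e)|} \le \frac{|T_j|}{|S_j|} \le \frac{1}{|B_r(e)|}$. -/

import Mathlib

/-- The word distance on a group `G` with respect to a generating set `Sg`:
`d(g,h)` is the minimal length of a word in `Sg ∪ Sg⁻¹` representing `g⁻¹h`. -/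
noncomputable def wordDist {G : Type*} [Group G] (Sg : Set G) (g h : G) : ℕ :=
  sInf {n | ∃ w : List G, w.length = n ∧ (∀ x ∈ w, x ∈ Sg ∨ x⁻¹ ∈ Sg) ∧ w.prod = g⁻¹ * h}

/-- The closed ball of radius `r` around `g` in the word metric. -/
noncomputable def wball {G : Type*} [Group G] (Sg : Set G) (g : G) (r : ℕ) : Set G :=
  {x | wordDist Sg g x ≤ r}

/-- The `r`-boundary `∂_r A = {g : 0 < d(g, A) ≤ r}` of a set `A`. -/
noncomputable def rBoundary {G : Type*} [Group G] (Sg : Set G) (r : ℕ) (A : Set G) : Set G :=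
  {g | g ∉ A ∧ ∃ a ∈ A, wordDist Sg a g ≤ r}

/-- A Følner sequence: a sequence of nonempty finite subsets whose `r`-boundaries are
asymptotically negligible for every `r > 0`. -/
def IsFolner {G : Type*} [Group G] (Sg : Set G) (S : ℕ → Finset G) : Prop :=
  (∀ j, (S j).Nonempty) ∧ ∀ r : ℕ, 0 < r →
    Filter.Tendsto (fun j => ((rBoundary Sg r (S j : Set G)).ncard : ℝ) / (S j).card)
      Filter.atTop (nhds 0)

/-- `c : G → ℝ` is a boundary in the degree-zero uniformly finite chain complex: there is
a bounded `1`-chain `b : G² → ℝ`, supported on pairs of uniformly bounded distance, with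
`∂₁ b = c`, where `∂₁ b (x) = ∑_y b(y,x) - ∑_y b(x,y)`. -/
noncomputable def IsUFBoundary {G : Type*} [Group G] (Sg : Set G) (c : G → ℝ) : Prop :=
  ∃ b : G × G → ℝ,
    (∃ C : ℝ, ∀ p, |b p| ≤ C) ∧
    (∃ R : ℕ, ∀ p : G × G, R < wordDist Sg p.1 p.2 → b p = 0) ∧
    ∀ x : G, c x = (∑ᶠ y, b (y, x)) - (∑ᶠ y, b (x, y))


open Set

section Aux
variable {G : Type*} [Group G]

private def wSet (Sg : Set G) (g h : G) : Set ℕ :=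
  {n | ∃ w : List G, w.length = n ∧ (∀ x ∈ w, x ∈ Sg ∨ x⁻¹ ∈ Sg) ∧ w.prod = g⁻¹ * h}

private lemma wordDist_eq (Sg : Set G) (g h : G) : wordDist Sg g h = sInf (wSet Sg g h) := rfl

private lemma wSet_nonempty {Sg : Set G} (hgen : Subgroup.closure Sg = ⊤) (g h : G) :
    (wSet Sg g h).Nonempty := by
  have hx : g⁻¹ * h ∈ Submonoid.closure (Sg ∪ Sg⁻¹) := by
    rw [← Subgroup.closure_toSubmonoid, hgen]
    exact Subgroup.mem_top _
  obtain ⟨l, hl, hprod⟩ := Submonoid.exists_list_of_mem_closure hx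
  exact ⟨l.length, l, rfl, fun x hx => by
    rcases hl x hx with h | h
    · exact Or.inl h
    · exact Or.inr (Set.mem_inv.mp h), hprod⟩

private lemma wordDist_self (Sg : Set G) (g : G) : wordDist Sg g g = 0 :=
  Nat.sInf_eq_zero.mpr (Or.inl ⟨[], rfl, by simp, by simp⟩)

private lemma wordDist_mul_left (Sg : Set G) (k g h : G) :
    wordDist Sg (k * g) (k * h) = wordDist Sg g h := by
  unfold wordDist
  congr 1
  ext n
  simp [mul_assoc, mul_inv_rev]

private lemma wSet_symm (Sg : Set G) (g h : G) : wSet Sg g h = wSet Sg h g := by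
  have key : ∀ g h : G, wSet Sg g h ⊆ wSet Sg h g := by
    rintro g h n ⟨w, hlen, hmem, hprod⟩
    refine ⟨(w.map fun x => x⁻¹).reverse, by simp [hlen], ?_, ?_⟩
    · intro x hx
      simp only [List.mem_reverse, List.mem_map] at hx
      obtain ⟨y, hy, rfl⟩ := hx
      rcases hmem y hy with h | h
      · exact Or.inr (by simpa using h)
      · exact Or.inl h
    · rw [← List.prod_inv_reverse, hprod]
      simp
  exact le_antisymm (key g h) (key h g)

private lemma wordDist_symm (Sg : Set G) (g h : G) : wordDist Sg g h = wordDist Sg h g := by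
  rw [wordDist_eq, wordDist_eq, wSet_symm]

private lemma wordDist_triangle {Sg : Set G} (hgen : Subgroup.closure Sg = ⊤) (g h k : G) :
    wordDist Sg g k ≤ wordDist Sg g h + wordDist Sg h k := by
  obtain ⟨w₁, hl₁, hm₁, hp₁⟩ := Nat.sInf_mem (wSet_nonempty hgen g h)
  obtain ⟨w₂, hl₂, hm₂, hp₂⟩ := Nat.sInf_mem (wSet_nonempty hgen h k)
  refine Nat.sInf_le ⟨w₁ ++ w₂, ?_, ?_, ?_⟩
  · simp [hl₁, hl₂, wordDist_eq]
  · intro x hx; rcases List.mem_append.mp hx with h' | h'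
    · exact hm₁ x h'
    · exact hm₂ x h'
  · rw [List.prod_append, hp₁, hp₂]; group

private lemma wball_one_finite {Sg : Finset G} (hgen : Subgroup.closure (Sg : Set G) = ⊤)
    (n : ℕ) : (wball (Sg : Set G) 1 n).Finite := by
  set A : Set G := (Sg : Set G) ∪ (Sg : Set G)⁻¹ with hA
  have hAfin : A.Finite := Sg.finite_toSet.union Sg.finite_toSet.inv
  haveI := hAfin.to_subtype
  have hlists : ((List.map (Subtype.val : A → G)) '' {l : List A | l.length ≤ n}).Finite :=
    (List.finite_length_le A n).image _
  refine (hlists.image List.prod).subset ?_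
  intro x hx
  have hx' : wordDist (Sg : Set G) 1 x ≤ n := hx
  obtain ⟨w, hlen, hmem, hprod⟩ := Nat.sInf_mem (wSet_nonempty hgen 1 x)
  have hwA : ∀ y ∈ w, y ∈ A := by
    intro y hy
    rcases hmem y hy with h | h
    · exact Or.inl h
    · exact Or.inr (Set.mem_inv.mpr h)
  refine ⟨w, ⟨w.pmap Subtype.mk hwA, ?_, ?_⟩, by simpa using hprod⟩
  · simpa [hlen, wordDist_eq] using hx'
  · simp [List.map_pmap]

private lemma wball_eq_image (Sg : Set G) (g : G) (n : ℕ) :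
    wball Sg g n = (fun x => g * x) '' wball Sg 1 n := by
  ext x
  constructor
  · intro hx
    refine ⟨g⁻¹ * x, ?_, by group⟩
    show wordDist Sg 1 (g⁻¹ * x) ≤ n
    have h1 : wordDist Sg 1 (g⁻¹ * x) = wordDist Sg g x := by
      have := wordDist_mul_left Sg g⁻¹ g x
      simpa using this
    rw [h1]; exact hx
  · rintro ⟨y, hy, rfl⟩
    show wordDist Sg g (g * y) ≤ n
    have : wordDist Sg g (g * y) = wordDist Sg 1 y := by
      have := wordDist_mul_left Sg g 1 y
      simpa using this
    rw [this]; exact hy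

private lemma wball_finite {Sg : Finset G} (hgen : Subgroup.closure (Sg : Set G) = ⊤)
    (g : G) (n : ℕ) : (wball (Sg : Set G) g n).Finite := by
  rw [wball_eq_image]
  exact (wball_one_finite hgen n).image _

private lemma wball_ncard {Sg : Finset G} (hgen : Subgroup.closure (Sg : Set G) = ⊤)
    (g : G) (n : ℕ) :
    (wball (Sg : Set G) g n).ncard = (wball (Sg : Set G) 1 n).ncard := by
  rw [wball_eq_image]
  exact Set.ncard_image_of_injective _ (mul_right_injective g)

private lemma mem_wball_self (Sg : Set G) (g : G) (n : ℕ) : g ∈ wball Sg g n := by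
  show wordDist Sg g g ≤ n
  rw [wordDist_self]; exact Nat.zero_le _

end Aux


/-- Let `G` be finitely generated amenable with Følner sequence
`(S_j)`, `r > 0`, `T` an `r`-tiling of `G`, and `T_j = {g ∈ T : B_r(g) ⊆ S_j}`. Then
eventually `1/(2|B_{2r}(e)|) ≤ |T_j|/|S_j| ≤ 1/|B_r(e)|`. -/
theorem tiling_density {G : Type*} [Group G]
    (Sg : Finset G) (hgen : Subgroup.closure (Sg : Set G) = ⊤)
    (S : ℕ → Finset G) (hS : IsFolner (Sg : Set G) S)
    (r : ℕ) (hr : 0 < r) (T : Set G)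
    (hdisj : ∀ g₁ ∈ T, ∀ g₂ ∈ T, g₁ ≠ g₂ →
      Disjoint (wball (Sg : Set G) g₁ r) (wball (Sg : Set G) g₂ r))
    (hcover : ∀ g : G, ∃ t ∈ T, g ∈ wball (Sg : Set G) t (2 * r)) :
    ∃ l : ℕ, ∀ j, l ≤ j →
      (1 : ℝ) / (2 * (Set.ncard (wball (Sg : Set G) 1 (2 * r)))) ≤
          (Set.ncard {g | g ∈ T ∧ wball (Sg : Set G) g r ⊆ (S j : Set G)} : ℝ) /
            (S j).card
      ∧ (Set.ncard {g | g ∈ T ∧ wball (Sg : Set G) g r ⊆ (S j : Set G)} : ℝ) /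
            (S j).card ≤ (1 : ℝ) / (Set.ncard (wball (Sg : Set G) 1 r)) := by
  classical
  have hBfin : ∀ n : ℕ, (wball (Sg : Set G) 1 n).Finite := wball_one_finite hgen
  have hBpos : ∀ n : ℕ, 0 < (wball (Sg : Set G) 1 n).ncard := fun n =>
    (Set.ncard_pos (hBfin n)).mpr ⟨1, mem_wball_self _ _ _⟩
  let B : ℕ → ℕ := fun n => (wball (Sg : Set G) 1 n).ncard
  let bF : G → ℕ → Finset G := fun g n => (wball_finite hgen g n).toFinset
  have hbF_mem : ∀ g n x, x ∈ bF g n ↔ x ∈ wball (Sg : Set G) g n := fun g n x =>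
    (wball_finite hgen g n).mem_toFinset
  have hbF_card : ∀ g n, (bF g n).card = B n := fun g n => by
    show _ = (wball (Sg : Set G) 1 n).ncard
    rw [← Set.ncard_eq_toFinset_card _ (wball_finite hgen g n), wball_ncard hgen]
  have hTsub : ∀ j : ℕ, {g | g ∈ T ∧ wball (Sg : Set G) g r ⊆ (S j : Set G)} ⊆ (S j : Set G) :=
    fun j g hg => hg.2 (mem_wball_self _ _ _)
  have hTfin : ∀ j, {g | g ∈ T ∧ wball (Sg : Set G) g r ⊆ (S j : Set G)}.Finite :=
    fun j => (S j).finite_toSet.subset (hTsub j)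
  let F : ℕ → Finset G := fun j => (hTfin j).toFinset
  have hF_card : ∀ j, (F j).card
      = Set.ncard {g | g ∈ T ∧ wball (Sg : Set G) g r ⊆ (S j : Set G)} :=
    fun j => (Set.ncard_eq_toFinset_card _ (hTfin j)).symm
  have hF_mem : ∀ j g, g ∈ F j ↔ g ∈ T ∧ wball (Sg : Set G) g r ⊆ (S j : Set G) := fun j g =>
    (hTfin j).mem_toFinset
  have hSpos : ∀ j, (0:ℝ) < (S j).card := fun j => by
    exact_mod_cast Finset.card_pos.mpr (hS.1 j)
  -- upper bound, valid for all j
  have hupper : ∀ j, (F j).card * B r ≤ (S j).card := by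
    intro j
    have hsub : (F j).biUnion (fun g => bF g r) ⊆ S j := by
      intro x hx
      obtain ⟨g, hg, hxg⟩ := Finset.mem_biUnion.mp hx
      exact ((hF_mem j g).mp hg).2 ((hbF_mem g r x).mp hxg)
    have hdisj' : ∀ g₁ ∈ F j, ∀ g₂ ∈ F j, g₁ ≠ g₂ → Disjoint (bF g₁ r) (bF g₂ r) := by
      intro g₁ h₁ g₂ h₂ hne
      rw [Set.Finite.disjoint_toFinset]
      exact hdisj g₁ ((hF_mem j g₁).mp h₁).1 g₂ ((hF_mem j g₂).mp h₂).1 hne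
    calc (F j).card * B r = ∑ g ∈ F j, (bF g r).card := by
          rw [Finset.sum_congr rfl (fun g _ => hbF_card g r), Finset.sum_const, smul_eq_mul]
      _ = ((F j).biUnion (fun g => bF g r)).card := (Finset.card_biUnion hdisj').symm
      _ ≤ (S j).card := Finset.card_le_card hsub
  have hb2 : (0:ℝ) < (B (2*r) : ℝ) := by exact_mod_cast hBpos (2*r)
  have hb3 : (0:ℝ) < (B (3*r) : ℝ) := by exact_mod_cast hBpos (3*r)
  have hbr : (0:ℝ) < (B r : ℝ) := by exact_mod_cast hBpos r
  have h3 : 0 < 3 * r := by omega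
  have hεpos : (0:ℝ) < 1 / (2 * (B (3*r) : ℝ)) := by positivity
  obtain ⟨l, hl⟩ := Filter.eventually_atTop.mp ((hS.2 (3*r) h3).eventually_lt_const hεpos)
  refine ⟨l, fun j hj => ?_⟩
  have hΦ := hl j hj
  -- boundary is finite
  have hDfin : (rBoundary (Sg : Set G) (3*r) (S j : Set G)).Finite := by
    refine ((S j).finite_toSet.biUnion (fun a _ => wball_finite hgen a (3*r))).subset ?_
    rintro h ⟨hnot, a, ha, hd⟩
    exact Set.mem_biUnion ha hd
  have hD_card : hDfin.toFinset.card = (rBoundary (Sg:Set G) (3*r) (S j : Set G)).ncard :=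
    (Set.ncard_eq_toFinset_card _ hDfin).symm
  set D := hDfin.toFinset with hDdef
  -- good and bad points
  set P : G → Prop := fun g => ∀ h : G, wordDist (Sg:Set G) g h ≤ 3*r → h ∈ (S j : Set G) with hPdef
  set good := (S j).filter P with hgooddef
  set bad := (S j).filter (fun g => ¬ P g) with hbaddef
  have hsplit : good.card + bad.card = (S j).card :=
    Finset.card_filter_add_card_filter_not _
  have hbad : bad.card ≤ D.card * B (3*r) := by
    have hsub : bad ⊆ D.biUnion (fun h => bF h (3*r)) := by
      intro g hg
      obtain ⟨hgS, hgP⟩ := Finset.mem_filter.mp hg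
      have hgP' : ∃ h : G, wordDist (Sg:Set G) g h ≤ 3*r ∧ h ∉ (S j : Set G) := by
        by_contra hc
        push_neg at hc
        exact hgP (fun h hd => hc h hd)
      obtain ⟨h, hd, hnot⟩ := hgP'
      refine Finset.mem_biUnion.mpr ⟨h, ?_, ?_⟩
      · rw [hDdef, hDfin.mem_toFinset]
        exact ⟨hnot, g, by simpa using hgS, hd⟩
      · rw [hbF_mem]
        show wordDist (Sg : Set G) h g ≤ 3*r
        rw [wordDist_symm]; exact hd
    calc bad.card ≤ (D.biUnion fun h => bF h (3*r)).card := Finset.card_le_card hsub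
      _ ≤ ∑ h ∈ D, (bF h (3*r)).card := Finset.card_biUnion_le
      _ = D.card * B (3*r) := by
          rw [Finset.sum_congr rfl (fun h _ => hbF_card h (3*r)), Finset.sum_const, smul_eq_mul]
  have hgood : good.card ≤ (F j).card * B (2*r) := by
    have hsub : good ⊆ (F j).biUnion (fun t => bF t (2*r)) := by
      intro g hg
      obtain ⟨hgS, hgP⟩ := Finset.mem_filter.mp hg
      rw [hPdef] at hgP
      obtain ⟨t, htT, htg⟩ := hcover g
      have htg' : wordDist (Sg:Set G) t g ≤ 2*r := htg
      refine Finset.mem_biUnion.mpr ⟨t, ?_, ?_⟩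
      · rw [hF_mem]
        refine ⟨htT, fun y hy => ?_⟩
        have hy' : wordDist (Sg:Set G) t y ≤ r := hy
        have h1 : wordDist (Sg:Set G) g y ≤ wordDist (Sg:Set G) g t + wordDist (Sg:Set G) t y :=
          wordDist_triangle hgen g t y
        have h2 : wordDist (Sg:Set G) g t = wordDist (Sg:Set G) t g := wordDist_symm _ _ _
        exact hgP y (by omega)
      · rw [hbF_mem]; exact htg
    calc good.card ≤ ((F j).biUnion fun t => bF t (2*r)).card := Finset.card_le_card hsub
      _ ≤ ∑ t ∈ F j, (bF t (2*r)).card := Finset.card_biUnion_le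
      _ = (F j).card * B (2*r) := by
          rw [Finset.sum_congr rfl (fun t _ => hbF_card t (2*r)), Finset.sum_const, smul_eq_mul]
  -- real arithmetic
  have hN := hSpos j
  have hDlt : (D.card : ℝ) * (2 * (B (3*r):ℝ)) < (S j).card := by
    have h1 : ((rBoundary (Sg:Set G) (3*r) (S j : Set G)).ncard : ℝ) / (S j).card
        < 1 / (2 * (B (3*r):ℝ)) := hΦ
    rw [← hD_card] at h1
    rw [div_lt_div_iff₀ hN (by positivity)] at h1
    linarith
  have hbadR : (bad.card : ℝ) < ((S j).card : ℝ) / 2 := by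
    have h1 : (bad.card : ℝ) ≤ (D.card : ℝ) * (B (3*r):ℝ) := by exact_mod_cast hbad
    nlinarith
  have hgoodR : (good.card : ℝ) ≤ ((F j).card : ℝ) * (B (2*r):ℝ) := by exact_mod_cast hgood
  have hsplitR : (good.card : ℝ) + (bad.card : ℝ) = ((S j).card : ℝ) := by exact_mod_cast hsplit
  constructor
  · show (1:ℝ) / (2 * ((B (2*r) : ℕ) : ℝ))
      ≤ (Set.ncard {g | g ∈ T ∧ wball (Sg : Set G) g r ⊆ (S j : Set G)} : ℝ) / (S j).card
    rw [← hF_card j, div_le_div_iff₀ (by positivity) hN]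
    nlinarith
  · show (Set.ncard {g | g ∈ T ∧ wball (Sg : Set G) g r ⊆ (S j : Set G)} : ℝ) / (S j).card
      ≤ (1:ℝ) / ((B r : ℕ) : ℝ)
    rw [← hF_card j, div_le_div_iff₀ hN hbr]
    have h1 : ((F j).card : ℝ) * (B r : ℝ) ≤ ((S j).card : ℝ) := by exact_mod_cast hupper j
    linarith
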